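/- Let A and B be disjoint nonempty finite sets, U = A ∪ B, and Y a finite set. Let P_U^A be a pmf on A, P_U^B a pmf on B, W₀ a pmf on Y with W₀(y) > 0 for all y, and for each u ∈ A let T(·|u) be a pmf on Y and for each u ∈ B let R(·|u) be a pmf on Y. For (μ₁,μ₂) ∈ ℝ² define P^{μ₁,μ₂} : U × Y → ℝ by P^{μ₁,μ₂}(u,y) = (1−μ₁)·P_U^A(u)·((1−μ₂)·W₀(y) + μ₂·T(y|u)) for u ∈ A and P^{μ₁,μ₂}(u,y) = μ₁·P_U^B(u)·R(y|u) for u ∈ B, and let I(μ₁,μ₂) denote the mutual information of P^{μ₁,μ₂}. Then the map μ₁ ↦ I(μ₁, 0) has a derivative at μ₁ = 0, equal to ∑_{u∈B} P_U^B(u)·D(R(·|u) ‖ W₀). -/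

import Mathlib

open Real

/-- Kullback–Leibler divergence of finite-alphabet "distributions" `p`, `q`. -/
noncomputable def klDiv {Z : Type*} [Fintype Z] (p q : Z → ℝ) : ℝ :=
  ∑ z, p z * (Real.log (p z) - Real.log (q z))

/-- Mutual information of a joint function `P` on a product of finite alphabets. -/
noncomputable def mutualInfo {U Y : Type*} [Fintype U] [Fintype Y] (P : U → Y → ℝ) : ℝ :=
  ∑ u, ∑ y, P u y *
    (Real.log (P u y) - Real.log (∑ y', P u y') - Real.log (∑ u', P u' y))

private lemma key1 (a c d : ℝ) :
    a * c * (Real.log (a * c) - Real.log a - Real.log d)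
      = a * c * (Real.log c - Real.log d) := by
  rcases eq_or_ne a 0 with ha | ha
  · simp [ha]
  rcases eq_or_ne c 0 with hc | hc
  · simp [hc]
  rw [Real.log_mul ha hc]; ring

theorem stmt_0 {U Y : Type*} [Fintype U] [Fintype Y] [DecidableEq U]
    (A B : Finset U) (hdisj : Disjoint A B) (hAne : A.Nonempty) (hBne : B.Nonempty)
    (hcover : A ∪ B = Finset.univ)
    (PA PB : U → ℝ) (W₀ : Y → ℝ) (T R : U → Y → ℝ)
    (hPA0 : ∀ u ∈ A, 0 ≤ PA u) (hPA1 : ∑ u ∈ A, PA u = 1)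
    (hPB0 : ∀ u ∈ B, 0 ≤ PB u) (hPB1 : ∑ u ∈ B, PB u = 1)
    (hW0pos : ∀ y, 0 < W₀ y) (hW0sum : ∑ y, W₀ y = 1)
    (hT0 : ∀ u ∈ A, ∀ y, 0 ≤ T u y) (hT1 : ∀ u ∈ A, ∑ y, T u y = 1)
    (hR0 : ∀ u ∈ B, ∀ y, 0 ≤ R u y) (hR1 : ∀ u ∈ B, ∑ y, R u y = 1)
    (I : ℝ → ℝ → ℝ)
    (hI : ∀ μ₁ μ₂, I μ₁ μ₂ = mutualInfo (fun (u : U) (y : Y) =>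
      if u ∈ A then (1 - μ₁) * PA u * ((1 - μ₂) * W₀ y + μ₂ * T u y)
      else μ₁ * PB u * R u y)) :
    HasDerivAt (fun μ₁ => I μ₁ 0) (∑ u ∈ B, PB u * klDiv (R u) W₀) 0 := by
  classical
  set ρ : Y → ℝ := fun y => ∑ u ∈ B, PB u * R u y with hρdef
  set q : ℝ → Y → ℝ := fun μ y => (1 - μ) * W₀ y + μ * ρ y with hqdef
  set F : ℝ → ℝ := fun μ => ∑ y, W₀ y * (Real.log (W₀ y) - Real.log (q μ y)) with hFdef
  set G : ℝ → ℝ :=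
    fun μ => ∑ u ∈ B, PB u * ∑ y, R u y * (Real.log (R u y) - Real.log (q μ y)) with hGdef
  have hmemB : ∀ u : U, u ∉ A → u ∈ B := by
    intro u hu
    have h := Finset.mem_univ u
    rw [← hcover, Finset.mem_union] at h
    tauto
  have hnotA : ∀ u ∈ B, u ∉ A := fun u hu => Finset.disjoint_right.mp hdisj hu
  have hq0 : ∀ y, q 0 y = W₀ y := by intro y; simp [hqdef]
  have hρsum : ∑ y, ρ y = 1 := by
    rw [hρdef]
    rw [Finset.sum_comm]
    calc ∑ u ∈ B, ∑ y, PB u * R u y = ∑ u ∈ B, PB u * ∑ y, R u y := by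
          refine Finset.sum_congr rfl fun u hu => ?_
          rw [Finset.mul_sum]
      _ = 1 := by
          rw [Finset.sum_congr rfl fun u hu => by rw [hR1 u hu, mul_one]]
          exact hPB1
  -- the mutual information equals (1-μ)F μ + μ G μ for every μ
  have hEq : ∀ μ : ℝ, I μ 0 = (1 - μ) * F μ + μ * G μ := by
    intro μ
    rw [hI]
    unfold mutualInfo
    simp only [sub_zero, one_mul, zero_mul, add_zero]
    have hrow : ∀ u : U,
        (∑ y', (if u ∈ A then (1 - μ) * PA u * W₀ y' else μ * PB u * R u y'))
          = if u ∈ A then (1 - μ) * PA u else μ * PB u := by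
      intro u
      by_cases hu : u ∈ A
      · simp only [hu, if_true]
        rw [← Finset.mul_sum, hW0sum, mul_one]
      · simp only [hu, if_false]
        rw [← Finset.mul_sum, hR1 u (hmemB u hu), mul_one]
    have hcol : ∀ y : Y,
        (∑ u', (if u' ∈ A then (1 - μ) * PA u' * W₀ y else μ * PB u' * R u' y))
          = q μ y := by
      intro y
      rw [show (Finset.univ : Finset U) = A ∪ B from hcover.symm,
        Finset.sum_union hdisj]
      have h1 : ∑ u' ∈ A, (if u' ∈ A then (1 - μ) * PA u' * W₀ y else μ * PB u' * R u' y)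
          = (1 - μ) * W₀ y := by
        rw [Finset.sum_congr rfl fun u hu => if_pos hu]
        rw [Finset.sum_congr rfl (fun u (hu : u ∈ A) =>
          show (1 - μ) * PA u * W₀ y = (1 - μ) * W₀ y * PA u by ring),
          ← Finset.mul_sum, hPA1, mul_one]
      have h2 : ∑ u' ∈ B, (if u' ∈ A then (1 - μ) * PA u' * W₀ y else μ * PB u' * R u' y)
          = μ * ρ y := by
        rw [Finset.sum_congr rfl fun u hu => if_neg (hnotA u hu)]
        rw [Finset.sum_congr rfl (fun u (hu : u ∈ B) =>
          show μ * PB u * R u y = μ * (PB u * R u y) by ring), ← Finset.mul_sum]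
      rw [h1, h2]
    simp only [hrow, hcol]
    rw [show (Finset.univ : Finset U) = A ∪ B from hcover.symm, Finset.sum_union hdisj]
    have hA : ∀ u ∈ A, (∑ y, (if u ∈ A then (1 - μ) * PA u * W₀ y else μ * PB u * R u y) *
        (Real.log (if u ∈ A then (1 - μ) * PA u * W₀ y else μ * PB u * R u y)
          - Real.log (if u ∈ A then (1 - μ) * PA u else μ * PB u)
          - Real.log (q μ y)))
        = PA u * ((1 - μ) * F μ) := by
      intro u hu
      simp only [hu, if_true]
      have hterm : ∀ y : Y, (1 - μ) * PA u * W₀ y *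
          (Real.log ((1 - μ) * PA u * W₀ y) - Real.log ((1 - μ) * PA u) - Real.log (q μ y))
          = PA u * ((1 - μ) * (W₀ y * (Real.log (W₀ y) - Real.log (q μ y)))) := by
        intro y
        rw [key1 ((1 - μ) * PA u) (W₀ y) (q μ y)]
        ring
      rw [Finset.sum_congr rfl fun y _ => hterm y, ← Finset.mul_sum, ← Finset.mul_sum, hFdef]
    have hB : ∀ u ∈ B, (∑ y, (if u ∈ A then (1 - μ) * PA u * W₀ y else μ * PB u * R u y) *
        (Real.log (if u ∈ A then (1 - μ) * PA u * W₀ y else μ * PB u * R u y)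
          - Real.log (if u ∈ A then (1 - μ) * PA u else μ * PB u)
          - Real.log (q μ y)))
        = μ * (PB u * ∑ y, R u y * (Real.log (R u y) - Real.log (q μ y))) := by
      intro u hu
      have hu' : u ∉ A := hnotA u hu
      simp only [hu', if_false]
      have hterm : ∀ y : Y, μ * PB u * R u y *
          (Real.log (μ * PB u * R u y) - Real.log (μ * PB u) - Real.log (q μ y))
          = μ * (PB u * (R u y * (Real.log (R u y) - Real.log (q μ y)))) := by
        intro y
        rw [key1 (μ * PB u) (R u y) (q μ y)]
        ring
      rw [Finset.sum_congr rfl fun y _ => hterm y, ← Finset.mul_sum, ← Finset.mul_sum]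
    rw [Finset.sum_congr rfl hA, Finset.sum_congr rfl hB, ← Finset.sum_mul, hPA1, one_mul,
      ← Finset.mul_sum, hGdef]
  -- derivatives
  have hder_q : ∀ y, HasDerivAt (fun μ => q μ y) (ρ y - W₀ y) 0 := by
    intro y
    have h : HasDerivAt (fun μ : ℝ => (1 - μ) * W₀ y + μ * ρ y)
        ((-1) * W₀ y + 1 * ρ y) 0 := by
      exact (((hasDerivAt_id (0:ℝ)).const_sub 1).mul_const (W₀ y)).add
        ((hasDerivAt_id (0:ℝ)).mul_const (ρ y))
    have h' : HasDerivAt (fun μ : ℝ => (1 - μ) * W₀ y + μ * ρ y) (ρ y - W₀ y) 0 := by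
      convert h using 1; ring
    exact h'
  have hder_logq : ∀ y, HasDerivAt (fun μ => Real.log (q μ y)) ((ρ y - W₀ y) / W₀ y) 0 := by
    intro y
    have h := (hder_q y).log (by rw [hq0 y]; exact (hW0pos y).ne')
    rwa [hq0 y] at h
  have hderF : HasDerivAt F 0 0 := by
    have h1 : HasDerivAt F (∑ y, W₀ y * (0 - (ρ y - W₀ y) / W₀ y)) 0 := by
      rw [hFdef]
      exact HasDerivAt.fun_sum fun y _ =>
        ((hasDerivAt_const (0:ℝ) (Real.log (W₀ y))).sub (hder_logq y)).const_mul (W₀ y)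
    have h2 : (∑ y, W₀ y * (0 - (ρ y - W₀ y) / W₀ y)) = 0 := by
      rw [Finset.sum_congr rfl fun y _ =>
        show W₀ y * (0 - (ρ y - W₀ y) / W₀ y) = W₀ y - ρ y by
          field_simp [(hW0pos y).ne']; ring]
      rw [Finset.sum_sub_distrib, hW0sum, hρsum, sub_self]
    rwa [h2] at h1
  have hderG : HasDerivAt G
      (∑ u ∈ B, PB u * ∑ y, R u y * (0 - (ρ y - W₀ y) / W₀ y)) 0 := by
    rw [hGdef]
    refine HasDerivAt.fun_sum fun u _ => ?_
    exact (HasDerivAt.fun_sum fun y _ =>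
      ((hasDerivAt_const (0:ℝ) (Real.log (R u y))).sub (hder_logq y)).const_mul (R u y)).const_mul
      (PB u)
  have hF0 : F 0 = 0 := by
    rw [hFdef]
    simp only
    rw [Finset.sum_congr rfl fun y _ => by rw [hq0 y, sub_self, mul_zero]]
    exact Finset.sum_const_zero
  have hG0 : G 0 = ∑ u ∈ B, PB u * klDiv (R u) W₀ := by
    rw [hGdef]
    refine Finset.sum_congr rfl fun u _ => ?_
    unfold klDiv
    congr 1
    refine Finset.sum_congr rfl fun y _ => ?_
    rw [hq0 y]
  have hderH : HasDerivAt (fun μ => (1 - μ) * F μ + μ * G μ)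
      (∑ u ∈ B, PB u * klDiv (R u) W₀) 0 := by
    have h1 : HasDerivAt (fun μ : ℝ => 1 - μ) (-1) 0 := (hasDerivAt_id (0:ℝ)).const_sub 1
    have h2 := (h1.fun_mul hderF).fun_add ((hasDerivAt_id (0:ℝ)).fun_mul hderG)
    refine h2.congr_deriv ?_
    rw [hF0, hG0]
    simp
  have hfun : (fun μ₁ => I μ₁ 0) = fun μ => (1 - μ) * F μ + μ * G μ := funext hEq
  rw [hfun]
  exact hderH
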